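/- Define the error function E(z) = 2∫_0^z e^{-πu²} du and the complementary function β(z) = ∫_z^∞ u^{-1/2} e^{-πu} du for z > 0. Then for all nonzero real z, E(z) = sgn(z) - sgn(z)·β(z²). -/

import Mathlib

open Real MeasureTheory

/-- The error function `E(z) = 2 ∫₀^z e^{-πu²} du`. -/
noncomputable def errE (z : ℝ) : ℝ := 2 * ∫ u in (0 : ℝ)..z, Real.exp (-π * u ^ 2)

/-- The complementary function `β(z) = ∫_z^∞ u^{-1/2} e^{-πu} du`. -/
noncomputable def betaComp (z : ℝ) : ℝ :=
  ∫ u in Set.Ioi z, u ^ (-(1 : ℝ) / 2) * Real.exp (-π * u)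

open Set
lemma gauss_int : Integrable (fun x : ℝ => Real.exp (-π * x ^ 2)) :=
  integrable_exp_neg_mul_sq pi_pos

lemma beta_int {c : ℝ} (hc : 0 < c) :
    IntegrableOn (fun u : ℝ => u ^ (-(1 : ℝ) / 2) * Real.exp (-π * u)) (Ici c) := by
  have hexp : IntegrableOn (fun u : ℝ => c ^ (-(1:ℝ)/2) * Real.exp (-π * u)) (Ici c) := by
    refine Integrable.const_mul ?_ _
    have := exp_neg_integrableOn_Ioi c pi_pos
    rw [← integrableOn_Ici_iff_integrableOn_Ioi] at this
    exact this.congr_fun (fun x _ => by ring_nf) measurableSet_Ici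
  refine Integrable.mono hexp ?_ ?_
  · apply ContinuousOn.aestronglyMeasurable
    · apply ContinuousOn.mul
      · exact fun x hx => (Real.continuousAt_rpow_const x _ (Or.inl (hc.trans_le hx).ne')).continuousWithinAt
      · exact (Real.continuous_exp.comp (continuous_const.mul continuous_id)).continuousOn
    · exact measurableSet_Ici
  · filter_upwards [ae_restrict_mem measurableSet_Ici] with x hx
    have hx0 : 0 < x := hc.trans_le hx
    rw [Real.norm_eq_abs, Real.norm_eq_abs, abs_of_nonneg, abs_of_nonneg]
    · refine mul_le_mul_of_nonneg_right ?_ (Real.exp_pos _).le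
      exact Real.rpow_le_rpow_of_nonpos hc hx (by norm_num)
    · positivity
    · positivity

lemma beta_sq (a : ℝ) (ha : 0 < a) :
    betaComp (a ^ 2) = 2 * ∫ t in Ioi a, Real.exp (-π * t ^ 2) := by
  have key := integral_comp_mul_deriv_Ioi (f := fun t : ℝ => t ^ 2) (f' := fun t => 2 * t)
    (g := fun u => u ^ (-(1 : ℝ) / 2) * Real.exp (-π * u)) (a := a)
    (by fun_prop)
    (Filter.tendsto_pow_atTop two_ne_zero)
    (fun x hx => by
      simpa using (hasDerivAt_pow 2 x).hasDerivWithinAt)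
    ?_ ?_ ?_
  · rw [betaComp]
    rw [← key, ← integral_const_mul]
    rw [setIntegral_congr_fun measurableSet_Ioi]
    intro x hx
    have hx0 : 0 < x := ha.trans hx
    simp only [Function.comp]
    rw [← Real.rpow_natCast x 2, ← Real.rpow_mul hx0.le]
    rw [show ((2:ℕ):ℝ) * (-(1:ℝ)/2) = -1 by norm_num, Real.rpow_neg_one]
    field_simp
  · intro x hx
    obtain ⟨t, ht, rfl⟩ := hx
    have : 0 < t ^ 2 := pow_pos (ha.trans ht) 2
    exact ContinuousWithinAt.mul
      ((Real.continuousAt_rpow_const _ _ (Or.inl this.ne')).continuousWithinAt)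
      ((Real.continuous_exp.comp (continuous_const.mul continuous_id)).continuousWithinAt)
  · have : (fun t : ℝ => t ^ 2) '' Ici a ⊆ Ici (a ^ 2) := by
      rintro _ ⟨t, ht, rfl⟩
      exact pow_le_pow_left₀ ha.le ht 2
    exact (beta_int (by positivity)).mono_set this
  · have : IntegrableOn (fun t : ℝ => 2 * Real.exp (-π * t ^ 2)) (Ici a) :=
      (gauss_int.const_mul 2).integrableOn
    refine this.congr_fun (fun x hx => ?_) measurableSet_Ici
    have hx0 : 0 < x := ha.trans_le hx
    simp only [Function.comp]
    rw [← Real.rpow_natCast x 2, ← Real.rpow_mul hx0.le]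
    rw [show ((2:ℕ):ℝ) * (-(1:ℝ)/2) = -1 by norm_num, Real.rpow_neg_one]
    field_simp

lemma errE_pos (a : ℝ) (ha : 0 < a) :
    errE a = 1 - betaComp (a ^ 2) := by
  rw [beta_sq a ha, errE]
  have split : ∫ t in Ioi (0:ℝ), Real.exp (-π * t ^ 2)
      = (∫ u in (0:ℝ)..a, Real.exp (-π * u ^ 2)) + ∫ t in Ioi a, Real.exp (-π * t ^ 2) := by
    rw [intervalIntegral.integral_of_le ha.le, ← setIntegral_union]
    · rw [Ioc_union_Ioi_eq_Ioi ha.le]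
    · exact Ioc_disjoint_Ioi le_rfl
    · exact measurableSet_Ioi
    · exact gauss_int.integrableOn
    · exact gauss_int.integrableOn
  have total : ∫ t in Ioi (0:ℝ), Real.exp (-π * t ^ 2) = 1 / 2 := by
    have := integral_gaussian_Ioi π
    rw [this]
    rw [div_self pi_pos.ne', Real.sqrt_one]
  rw [total] at split
  linarith [split]

/-- For all nonzero real `z`, `E(z) = sgn(z) - sgn(z) β(z²)`. -/
theorem errE_eq_sign_sub_sign_mul_beta (z : ℝ) (hz : z ≠ 0) :
    errE z = Real.sign z - Real.sign z * betaComp (z ^ 2) := by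
  rcases lt_or_gt_of_ne hz with h | h
  · rw [Real.sign_of_neg h]
    have hodd : errE z = -errE (-z) := by
      rw [errE, errE]
      have := intervalIntegral.integral_comp_neg (a := 0) (b := -z)
        (fun u => Real.exp (-π * u ^ 2))
      simp only [neg_neg, neg_zero] at this
      rw [show (∫ u in (0:ℝ)..(-z), Real.exp (-π * u ^ 2))
          = ∫ x in (0:ℝ)..(-z), Real.exp (-π * (-x) ^ 2) by
        congr 1; ext x; ring_nf]
      rw [this, intervalIntegral.integral_symm]
      ring
    rw [hodd, errE_pos (-z) (by linarith), show (-z) ^ 2 = z ^ 2 by ring]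
    ring
  · rw [Real.sign_of_pos h, errE_pos z h]
    ring
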